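/- Let polynomials p and p̃ of degree d be written in Bernstein-Bézier form with respect to triangles T = ⟨v_1,v_2,v_3⟩ and T̃ = ⟨v_4,v_3,v_2⟩ sharing the edge e = ⟨v_2,v_3⟩, with coefficients c_{ijk} and c̃_{rst}. Then p and p̃ agree on the line through v_2 and v_3 if and only if c̃_{0jk} = c_{0kj} for all j+k = d. -/

import Mathlib

open Finset Polynomial

/-- Bernstein basis functions on a line are linearly independent. -/
lemma bern_indep (d : ℕ) (a : ℕ → ℝ)
    (h : ∀ s : ℝ, ∑ k ∈ range (d+1), a k * (1-s)^(d-k) * s^k = 0) :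
    ∀ k, k ≤ d → a k = 0 := by
  set Q : Polynomial ℝ := ∑ k ∈ range (d+1), C (a k) * (1 - X)^(d-k) * X^k with hQ
  have hev : ∀ s : ℝ, Q.eval s = 0 := by
    intro s
    rw [hQ]
    simpa [eval_finset_sum] using h s
  have hQ0 : Q = 0 := by
    apply Polynomial.funext
    intro s; simp [hev s]
  intro k hk
  induction k using Nat.strong_induction_on with
  | _ k ih =>
    have hco : Q.coeff k = 0 := by rw [hQ0]; simp
    rw [hQ, finset_sum_coeff] at hco
    rw [Finset.sum_eq_single k ?h1 ?h2] at hco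
    · rw [Polynomial.coeff_mul_X_pow'] at hco
      simpa [Polynomial.coeff_zero_eq_eval_zero] using hco
    case h1 =>
      intro l hl hlk
      rcases lt_or_gt_of_ne hlk with h' | h'
      · rw [ih l h' (le_of_lt (lt_of_lt_of_le h' hk))]; simp
      · rw [Polynomial.coeff_mul_X_pow']
        simp [Nat.not_le_of_lt h']
    case h2 =>
      intro hkk
      exact absurd (mem_range.2 (Nat.lt_succ_of_le hk)) hkk

/-- Uniqueness of barycentric coordinates. -/
lemma bary_unique (v : Fin 3 → (Fin 2 → ℝ)) (hv : AffineIndependent ℝ v)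
    (w w' : Fin 3 → ℝ) (hw : ∑ i, w i = 1) (hw' : ∑ i, w' i = 1)
    (h : ∑ i, w i • v i = ∑ i, w' i • v i) : w = w' := by
  apply (affineIndependent_iff_eq_of_fintype_affineCombination_eq ℝ v).1 hv w w' hw hw'
  rw [Finset.univ.affineCombination_eq_linear_combination v w hw,
      Finset.univ.affineCombination_eq_linear_combination v w' hw']
  exact h

/-- The multinomial coefficient is symmetric in the last two slots. -/
lemma multinomial_swap (j k : ℕ) :
    Nat.multinomial Finset.univ ![0, j, k] = Nat.multinomial Finset.univ ![(0:ℕ), k, j] := by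
  unfold Nat.multinomial
  simp [Fin.sum_univ_three, Fin.prod_univ_three, Nat.add_comm j k, Nat.mul_comm]

/-- Reduction of a sum over `antidiagonalTuple 3 d` to a sum over `range (d+1)`
when the first barycentric coordinate vanishes. -/
lemma sum_reduce (d : ℕ) (g : (Fin 3 → ℕ) → ℝ) (u v : ℝ) :
    ∑ t ∈ Finset.Nat.antidiagonalTuple 3 d, g t * ((0:ℝ)^(t 0) * u^(t 1) * v^(t 2))
      = ∑ k ∈ range (d+1), g ![0, d-k, k] * (u^(d-k) * v^k) := by
  rw [← Finset.sum_subset (s₁ := (range (d+1)).image (fun k => ![0, d-k, k]))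
      (f := fun t => g t * ((0:ℝ)^(t 0) * u^(t 1) * v^(t 2)))]
  · rw [Finset.sum_image]
    · apply Finset.sum_congr rfl
      intro k hk
      simp
    · intro a ha b hb hab
      have := congrFun hab 2
      simpa using this
  · intro t ht
    simp only [Finset.mem_image, Finset.mem_range] at ht
    obtain ⟨k, hk, rfl⟩ := ht
    rw [Finset.Nat.mem_antidiagonalTuple]
    simp [Fin.sum_univ_three]
    omega
  · intro t ht hnot
    rw [Finset.Nat.mem_antidiagonalTuple] at ht
    have h0 : t 0 ≠ 0 := by
      intro h0
      apply hnot
      simp only [Finset.mem_image, Finset.mem_range]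
      refine ⟨t 2, ?_, ?_⟩
      · rw [Fin.sum_univ_three] at ht; omega
      · funext i
        fin_cases i <;> simp_all [Fin.sum_univ_three] <;> omega
    rw [zero_pow h0]
    ring

/-- C⁰ smoothness condition in Bernstein–Bézier form: polynomials `p` and `p̃`
of degree `d`, written in BB-form with respect to the triangles
`T = ⟨v₁,v₂,v₃⟩` and `T̃ = ⟨v₄,v₃,v₂⟩` sharing the edge `⟨v₂,v₃⟩`, agree on the
line through `v₂` and `v₃` if and only if `c̃_{0jk} = c_{0kj}` for all
`j+k = d`. -/
theorem bb_c0_smoothness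
    (d : ℕ) (v₁ v₂ v₃ v₄ : Fin 2 → ℝ)
    (hT : AffineIndependent ℝ ![v₁, v₂, v₃])
    (hT' : AffineIndependent ℝ ![v₄, v₃, v₂])
    (β β' : (Fin 2 → ℝ) → Fin 3 → ℝ)
    (hβ1 : ∀ x, ∑ i, β x i = 1)
    (hβ2 : ∀ x, ∑ i, β x i • ![v₁, v₂, v₃] i = x)
    (hβ'1 : ∀ x, ∑ i, β' x i = 1)
    (hβ'2 : ∀ x, ∑ i, β' x i • ![v₄, v₃, v₂] i = x)
    (c c' : (Fin 3 → ℕ) → ℝ)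
    (p p' : (Fin 2 → ℝ) → ℝ)
    (hp : ∀ x, p x = ∑ t ∈ Finset.Nat.antidiagonalTuple 3 d,
      c t * ((Nat.multinomial Finset.univ t : ℝ) * ∏ i, β x i ^ t i))
    (hp' : ∀ x, p' x = ∑ t ∈ Finset.Nat.antidiagonalTuple 3 d,
      c' t * ((Nat.multinomial Finset.univ t : ℝ) * ∏ i, β' x i ^ t i)) :
    (∀ s : ℝ, p ((1 - s) • v₂ + s • v₃) = p' ((1 - s) • v₂ + s • v₃)) ↔
      (∀ j k : ℕ, j + k = d → c' ![0, j, k] = c ![0, k, j]) := by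
  -- barycentric coordinates of points on the shared edge
  have hβx : ∀ s : ℝ, β ((1 - s) • v₂ + s • v₃) = ![0, 1-s, s] := by
    intro s
    apply bary_unique ![v₁, v₂, v₃] hT _ _ (hβ1 _) _
    · rw [hβ2]
      simp [Fin.sum_univ_three]
    · simp [Fin.sum_univ_three]
  have hβ'x : ∀ s : ℝ, β' ((1 - s) • v₂ + s • v₃) = ![0, s, 1-s] := by
    intro s
    apply bary_unique ![v₄, v₃, v₂] hT' _ _ (hβ'1 _) _
    · rw [hβ'2]
      simp [Fin.sum_univ_three]
      module
    · simp [Fin.sum_univ_three]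
  -- restriction of p to the edge
  have key : ∀ s : ℝ, p ((1 - s) • v₂ + s • v₃) = ∑ k ∈ range (d+1),
      (c ![0, d-k, k] * (Nat.multinomial Finset.univ ![0, d-k, k] : ℝ)) * ((1-s)^(d-k) * s^k) := by
    intro s
    rw [hp]
    calc ∑ t ∈ Finset.Nat.antidiagonalTuple 3 d,
          c t * ((Nat.multinomial Finset.univ t : ℝ) * ∏ i, β ((1 - s) • v₂ + s • v₃) i ^ t i)
        = ∑ t ∈ Finset.Nat.antidiagonalTuple 3 d,
          (c t * (Nat.multinomial Finset.univ t : ℝ)) * ((0:ℝ)^(t 0) * (1-s)^(t 1) * s^(t 2)) := by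
          apply Finset.sum_congr rfl
          intro t ht
          rw [hβx s]
          simp only [Fin.prod_univ_three, Matrix.cons_val_zero, Matrix.cons_val_one,
            Matrix.head_cons, Matrix.cons_val_two, Matrix.tail_cons]
          ring
      _ = _ := sum_reduce d (fun t => c t * (Nat.multinomial Finset.univ t : ℝ)) (1-s) s
  -- restriction of p' to the edge
  have key1' : ∀ s : ℝ, p' ((1 - s) • v₂ + s • v₃) = ∑ k ∈ range (d+1),
      (c' ![0, d-k, k] * (Nat.multinomial Finset.univ ![0, d-k, k] : ℝ)) * (s^(d-k) * (1-s)^k) := by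
    intro s
    rw [hp']
    calc ∑ t ∈ Finset.Nat.antidiagonalTuple 3 d,
          c' t * ((Nat.multinomial Finset.univ t : ℝ) * ∏ i, β' ((1 - s) • v₂ + s • v₃) i ^ t i)
        = ∑ t ∈ Finset.Nat.antidiagonalTuple 3 d,
          (c' t * (Nat.multinomial Finset.univ t : ℝ)) * ((0:ℝ)^(t 0) * s^(t 1) * (1-s)^(t 2)) := by
          apply Finset.sum_congr rfl
          intro t ht
          rw [hβ'x s]
          simp only [Fin.prod_univ_three, Matrix.cons_val_zero, Matrix.cons_val_one,
            Matrix.head_cons, Matrix.cons_val_two, Matrix.tail_cons]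
          ring
      _ = _ := sum_reduce d (fun t => c' t * (Nat.multinomial Finset.univ t : ℝ)) s (1-s)
  -- reindexed restriction of p'
  have key' : ∀ s : ℝ, p' ((1 - s) • v₂ + s • v₃) = ∑ k ∈ range (d+1),
      (c' ![0, k, d-k] * (Nat.multinomial Finset.univ ![0, d-k, k] : ℝ)) * ((1-s)^(d-k) * s^k) := by
    intro s
    rw [key1' s, ← Finset.sum_range_reflect]
    apply Finset.sum_congr rfl
    intro k hk
    simp only [Finset.mem_range] at hk
    have h1 : d + 1 - 1 - k = d - k := by omega
    have h2 : d - (d - k) = k := by omega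
    rw [h1, h2, multinomial_swap]
    ring
  constructor
  · intro h j k hjk
    have hzero : ∀ s : ℝ, ∑ m ∈ range (d+1),
        ((c ![0, d-m, m] - c' ![0, m, d-m]) * (Nat.multinomial Finset.univ ![0, d-m, m] : ℝ))
          * (1-s)^(d-m) * s^m = 0 := by
      intro s
      have h0 := h s
      rw [key s, key' s] at h0
      have heq : ∑ m ∈ range (d+1),
          ((c ![0, d-m, m] - c' ![0, m, d-m]) * (Nat.multinomial Finset.univ ![0, d-m, m] : ℝ))
            * (1-s)^(d-m) * s^m
          = (∑ m ∈ range (d+1), (c ![0, d-m, m] * (Nat.multinomial Finset.univ ![0, d-m, m] : ℝ))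
              * ((1-s)^(d-m) * s^m))
            - ∑ m ∈ range (d+1), (c' ![0, m, d-m] * (Nat.multinomial Finset.univ ![0, d-m, m] : ℝ))
              * ((1-s)^(d-m) * s^m) := by
        rw [← Finset.sum_sub_distrib]
        apply Finset.sum_congr rfl
        intro m _
        ring
      rw [heq, ← h0, sub_self]
    have hA := bern_indep d
      (fun k => (c ![0, d-k, k] - c' ![0, k, d-k]) * (Nat.multinomial Finset.univ ![0, d-k, k] : ℝ))
      hzero j (by omega)
    have hdj : d - j = k := by omega
    rw [hdj] at hA
    have hM : (Nat.multinomial Finset.univ ![0, k, j] : ℝ) ≠ 0 := by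
      exact_mod_cast (Nat.multinomial_pos _ _).ne'
    have := (mul_eq_zero.1 hA).resolve_right hM
    linarith [sub_eq_zero.1 this]
  · intro h s
    rw [key s, key' s]
    apply Finset.sum_congr rfl
    intro k hk
    simp only [Finset.mem_range] at hk
    rw [h k (d-k) (by omega)]
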